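/- Let n ≥ 3, let W n be the normalized n-qubit W-state, and let S ⊆ Fin n be nonempty with card S ≠ 1 and card S ≠ n − 1. Then W n does not admit a symmetric move for S: there is an orthonormal basis e of ℂ² (namely the computational basis) such that coeff (W n) e (fun i => if i ∈ S then l else 1 - l) = 0 for every l : Fin 2. (Together with the existence of symmetric moves for singletons and their complements, this is the characterization underlying Theorem 1 of the paper: the W-state allows k-symmetric moves only for k ∈ {1, n−1}.) -/
import Mathlib


/-- Coefficient of `ψ` on the product basis vector `⊗ᵢ e (f i)`. -/
noncomputable def coeff {n : ℕ} (ψ : (Fin n → Fin 2) → ℂ)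
    (e : Fin 2 → EuclideanSpace ℂ (Fin 2)) (f : Fin n → Fin 2) : ℂ :=
  ∑ x : Fin n → Fin 2, (∏ i, star ((e (f i)) (x i))) * ψ x

/-- The normalized `n`-qubit W-state: amplitude `1/√n` on computational-basis
strings with exactly one `1`, and `0` elsewhere. -/
noncomputable def Wstate (n : ℕ) : (Fin n → Fin 2) → ℂ := fun x =>
  if (Finset.univ.filter fun i => x i = 1).card = 1 then (1 / Real.sqrt n : ℂ) else 0

lemma coeff_basisFun {n : ℕ} (ψ : (Fin n → Fin 2) → ℂ) (f : Fin n → Fin 2) :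
    coeff ψ (fun j => (EuclideanSpace.basisFun (Fin 2) ℂ) j) f = ψ f := by
  unfold coeff
  rw [Fintype.sum_eq_single f]
  · have : ∀ i : Fin n, star (((EuclideanSpace.basisFun (Fin 2) ℂ) (f i)) (f i)) = 1 := by
      intro i
      simp [EuclideanSpace.basisFun_apply, EuclideanSpace.single_apply]
    simp [this]
  · intro x hx
    obtain ⟨i, hi⟩ := Function.ne_iff.mp hx
    have : star (((EuclideanSpace.basisFun (Fin 2) ℂ) (f i)) (x i)) = 0 := by
      simp [EuclideanSpace.basisFun_apply, EuclideanSpace.single_apply, hi]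
    rw [Finset.prod_eq_zero (Finset.mem_univ i) this, zero_mul]

theorem Wstate_no_intermediate_symmetric_move {n : ℕ} (hn : 3 ≤ n)
    (S : Finset (Fin n)) (hS : S.Nonempty)
    (h1 : S.card ≠ 1) (h2 : S.card ≠ n - 1) :
    ∃ e : OrthonormalBasis (Fin 2) ℂ (EuclideanSpace ℂ (Fin 2)),
      ∀ l : Fin 2,
        coeff (Wstate n) (fun j => e j) (fun i => if i ∈ S then l else 1 - l) = 0 := by
  refine ⟨EuclideanSpace.basisFun (Fin 2) ℂ, fun l => ?_⟩
  rw [coeff_basisFun]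
  unfold Wstate
  fin_cases l <;> simp only [Fin.mk_zero, Fin.mk_one]
  · -- l = 0 : pattern is 1 off S
    have hfilter : (Finset.univ.filter fun i =>
        (if i ∈ S then (0 : Fin 2) else 1 - 0) = 1) = Sᶜ := by
      ext i
      by_cases h : i ∈ S <;> simp [h]
    rw [if_neg]
    rw [hfilter, Finset.card_compl]
    intro h
    rw [Fintype.card_fin] at h
    apply h2
    have hle : S.card ≤ n := by simpa using S.card_le_univ
    omega
  · -- l = 1 : pattern is 1 on S
    have hfilter : (Finset.univ.filter fun i =>
        (if i ∈ S then (1 : Fin 2) else 1 - 1) = 1) = S := by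
      ext i
      by_cases h : i ∈ S <;> simp [h]
    rw [if_neg]
    rw [hfilter]
    exact h1
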